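/- Let V' be a finite-dimensional real vector space with a symmetric bilinear form ⟨·,·⟩ and let V = V' ⊕ ℝw ⊕ ℝw* carry the hyperbolic extension of the form. For a 2-dimensional positive-definite subspace P ⊂ V', an element ω ∈ V' with ω ⊥ P and α := ω² > 0, and B ∈ V', set H₁(P,B) = {x − ⟨x,B⟩w : x ∈ P} and H₂(ω,B) = ℝ(½(α−B²)w + w* + B) ⊕ ℝ(ω − ⟨ω,B⟩w). Let ψ₁ : V → V be the linear map which is the identity on V' and sends w ↦ w*, w* ↦ w. Assume B ⊥ P, B ⊥ ω and α ≠ B², and set λ = 2/(α − B²). Then ψ₁ is an isometry of V, and ψ₁(H₁(P,B)) = H₁(P, λB) and ψ₁(H₂(ω,B)) = H₂(λω, λB) as subspaces of V (where H₂(λω, λB) is formed with (λω)² in place of α). -/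

import Mathlib

open Pointwise


/-- The hyperbolic extension form on `V' × ℝ × ℝ`, where `(x, a, c)` represents
`x + a•w + c•w*`:  `V' ⊥ (ℝw ⊕ ℝw*)`, `w² = w*² = 0`, `⟨w,w*⟩ = 1`. -/
noncomputable def hypPairing {V : Type*} [AddCommGroup V] [Module ℝ V]
    (b : LinearMap.BilinForm ℝ V) (p q : V × ℝ × ℝ) : ℝ :=
  b p.1 q.1 + p.2.1 * q.2.2 + p.2.2 * q.2.1

/-- `H₁(P,B) = {x − ⟨x,B⟩w : x ∈ P}`. -/
noncomputable def H1 {V : Type*} [AddCommGroup V] [Module ℝ V]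
    (b : LinearMap.BilinForm ℝ V) (P : Submodule ℝ V) (B : V) :
    Submodule ℝ (V × ℝ × ℝ) :=
  P.map (LinearMap.prod LinearMap.id (LinearMap.prod (-(b.flip B)) 0))

/-- `H₂(ω,B) = ℝ(½(ω²−B²)w + w* + B) ⊕ ℝ(ω − ⟨ω,B⟩w)`. -/
noncomputable def H2 {V : Type*} [AddCommGroup V] [Module ℝ V]
    (b : LinearMap.BilinForm ℝ V) (ω B : V) : Submodule ℝ (V × ℝ × ℝ) :=
  Submodule.span ℝ {(B, (b ω ω - b B B) / 2, 1), (ω, -(b ω B), 0)}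

/-- `ψ₁ : V → V`: the identity on `V'`, `w ↦ w*`, `w* ↦ w`. -/
noncomputable def psi1 (V : Type*) [AddCommGroup V] [Module ℝ V] :
    (V × ℝ × ℝ) →ₗ[ℝ] (V × ℝ × ℝ) :=
  LinearMap.prodMap LinearMap.id
    (LinearMap.prod (LinearMap.snd ℝ ℝ ℝ) (LinearMap.fst ℝ ℝ ℝ))

/-- `ψ₁` is an isometry of `V = V' ⊕ ℝw ⊕ ℝw*`, and (for `B ⊥ P`, `B ⊥ ω`, `α ≠ B²`,
`λ = 2/(α − B²)`) one has `ψ₁(H₁(P,B)) = H₁(P,λB)` and `ψ₁(H₂(ω,B)) = H₂(λω,λB)`. -/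
theorem stmt17 {V : Type*} [AddCommGroup V] [Module ℝ V] [FiniteDimensional ℝ V]
    (b : LinearMap.BilinForm ℝ V) (hsymm : ∀ x y, b x y = b y x)
    (P : Submodule ℝ V) (hP2 : Module.finrank ℝ P = 2)
    (hPpos : ∀ x ∈ P, x ≠ 0 → 0 < b x x)
    (ω : V) (hωP : ∀ x ∈ P, b ω x = 0) (hω : 0 < b ω ω)
    (B : V) (hBP : ∀ x ∈ P, b B x = 0) (hBω : b B ω = 0)
    (hαB : b ω ω ≠ b B B) :
    (∀ p q : V × ℝ × ℝ, hypPairing b (psi1 V p) (psi1 V q) = hypPairing b p q) ∧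
    Submodule.map (psi1 V) (H1 b P B) = H1 b P ((2 / (b ω ω - b B B)) • B) ∧
    Submodule.map (psi1 V) (H2 b ω B) =
      H2 b ((2 / (b ω ω - b B B)) • ω) ((2 / (b ω ω - b B B)) • B) := by

  set α := b ω ω
  set β := b B B
  set lam : ℝ := 2 / (α - β) with hlam
  have hsub : α - β ≠ 0 := sub_ne_zero.mpr hαB
  have hlamne : lam ≠ 0 := div_ne_zero two_ne_zero hsub
  refine ⟨?_, ?_, ?_⟩
  · intro p q
    simp [hypPairing, psi1]
    ring
  · rw [H1, H1, ← Submodule.map_comp]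
    ext x
    simp only [Submodule.mem_map, LinearMap.coe_comp, Function.comp_apply]
    constructor
    · rintro ⟨y, hy, rfl⟩
      refine ⟨y, hy, ?_⟩
      have h1 : b y B = 0 := by rw [hsymm]; exact hBP y hy
      simp [psi1, LinearMap.BilinForm.flip_apply, h1]
    · rintro ⟨y, hy, rfl⟩
      refine ⟨y, hy, ?_⟩
      have h1 : b y B = 0 := by rw [hsymm]; exact hBP y hy
      simp [psi1, LinearMap.BilinForm.flip_apply, h1]
  · have hωB : b ω B = 0 := by rw [hsymm]; exact hBω
    rw [H2, H2, Submodule.map_span, Set.image_pair]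
    have e1 : ((b (lam • ω) (lam • ω) - b (lam • B) (lam • B)) / 2 : ℝ)
        = lam := by
      simp only [map_smul, LinearMap.smul_apply, smul_eq_mul]
      field_simp [hlam]
      exact div_mul_cancel₀ 2 hsub
    have e2 : (b (lam • ω) (lam • B) : ℝ) = 0 := by
      simp [hωB]
    have hv1 : ((lam • B, (b (lam • ω) (lam • ω) - b (lam • B) (lam • B)) / 2, 1)
        : V × ℝ × ℝ) = lam • (psi1 V (B, (α - β) / 2, 1)) := by
      rw [e1]
      have : lam * ((α - β) / 2) = 1 := by field_simp [hlam]; exact div_mul_cancel₀ 2 hsub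
      simp [psi1, Prod.ext_iff, smul_eq_mul, this]
    have hv2 : ((lam • ω, -(b (lam • ω) (lam • B)), 0) : V × ℝ × ℝ)
        = lam • (psi1 V (ω, -(b ω B), 0)) := by
      rw [e2]
      simp [psi1, Prod.ext_iff, hωB]
    rw [hv1, hv2,
      show ({lam • psi1 V (B, (α - β) / 2, 1), lam • psi1 V (ω, -(b ω B), 0)} :
          Set (V × ℝ × ℝ)) = lam • {psi1 V (B, (α - β) / 2, 1), psi1 V (ω, -(b ω B), 0)} by
        rw [Set.smul_set_insert, Set.smul_set_singleton],
      Submodule.span_smul_eq_of_isUnit _ _ (isUnit_iff_ne_zero.mpr hlamne)]
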